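/- Let 0 < ξ₀ < ξ₁ and 0 < η₀ < η₁. Set s := √( ξ₀²ξ₁²η₁² / (ξ₁²η₀² + ξ₀²η₁² − ξ₀²η₀²) ) and h := ξ₀ √( (ξ₁²η₁² − ξ₀²η₀²) / (ξ₀²η₁² + ξ₁²η₀² − 2ξ₀²η₀²) ). Then h² − s² = ξ₀⁴η₀²(ξ₁² − ξ₀²)(η₁² − η₀²) / ( (ξ₀²η₁² + ξ₁²η₀² − 2ξ₀²η₀²)(ξ₁²η₀² + ξ₀²η₁² − ξ₀²η₀²) ) > 0; in particular s < h. -/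

import Mathlib

/-- The gap between the subnormality bound `s` and the hyponormality bound `h`:
`s < h`, via an explicit formula for `h² − s²`. -/
theorem stmt5 (ξ₀ ξ₁ η₀ η₁ s h : ℝ)
    (hξ₀ : 0 < ξ₀) (hξ : ξ₀ < ξ₁) (hη₀ : 0 < η₀) (hη : η₀ < η₁)
    (hs : s = Real.sqrt (ξ₀ ^ 2 * ξ₁ ^ 2 * η₁ ^ 2 /
      (ξ₁ ^ 2 * η₀ ^ 2 + ξ₀ ^ 2 * η₁ ^ 2 - ξ₀ ^ 2 * η₀ ^ 2)))
    (hh : h = ξ₀ * Real.sqrt ((ξ₁ ^ 2 * η₁ ^ 2 - ξ₀ ^ 2 * η₀ ^ 2) /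
      (ξ₀ ^ 2 * η₁ ^ 2 + ξ₁ ^ 2 * η₀ ^ 2 - 2 * ξ₀ ^ 2 * η₀ ^ 2))) :
    h ^ 2 - s ^ 2 = ξ₀ ^ 4 * η₀ ^ 2 * (ξ₁ ^ 2 - ξ₀ ^ 2) * (η₁ ^ 2 - η₀ ^ 2) /
      ((ξ₀ ^ 2 * η₁ ^ 2 + ξ₁ ^ 2 * η₀ ^ 2 - 2 * ξ₀ ^ 2 * η₀ ^ 2) *
       (ξ₁ ^ 2 * η₀ ^ 2 + ξ₀ ^ 2 * η₁ ^ 2 - ξ₀ ^ 2 * η₀ ^ 2)) ∧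
    0 < h ^ 2 - s ^ 2 ∧ s < h := by
  have hξ₁ : 0 < ξ₁ := hξ₀.trans hξ
  have hη₁ : 0 < η₁ := hη₀.trans hη
  have hA : ξ₀ ^ 2 < ξ₁ ^ 2 := by nlinarith
  have hB : η₀ ^ 2 < η₁ ^ 2 := by nlinarith
  have hD1 : 0 < ξ₁ ^ 2 * η₀ ^ 2 + ξ₀ ^ 2 * η₁ ^ 2 - ξ₀ ^ 2 * η₀ ^ 2 := by
    nlinarith [mul_pos (pow_pos hξ₁ 2) (pow_pos hη₀ 2),
      mul_pos (pow_pos hξ₀ 2) (sub_pos.2 hB)]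
  have hD2 : 0 < ξ₀ ^ 2 * η₁ ^ 2 + ξ₁ ^ 2 * η₀ ^ 2 - 2 * ξ₀ ^ 2 * η₀ ^ 2 := by
    nlinarith [mul_pos (pow_pos hξ₀ 2) (sub_pos.2 hB),
      mul_pos (sub_pos.2 hA) (pow_pos hη₀ 2)]
  have hN2 : 0 < ξ₁ ^ 2 * η₁ ^ 2 - ξ₀ ^ 2 * η₀ ^ 2 := by
    nlinarith [mul_pos (pow_pos hξ₀ 2) (sub_pos.2 hB),
      mul_pos (sub_pos.2 hA) (pow_pos hη₁ 2)]
  have hs2 : s ^ 2 = ξ₀ ^ 2 * ξ₁ ^ 2 * η₁ ^ 2 /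
      (ξ₁ ^ 2 * η₀ ^ 2 + ξ₀ ^ 2 * η₁ ^ 2 - ξ₀ ^ 2 * η₀ ^ 2) := by
    rw [hs, Real.sq_sqrt (by positivity)]
  have hh2 : h ^ 2 = ξ₀ ^ 2 * ((ξ₁ ^ 2 * η₁ ^ 2 - ξ₀ ^ 2 * η₀ ^ 2) /
      (ξ₀ ^ 2 * η₁ ^ 2 + ξ₁ ^ 2 * η₀ ^ 2 - 2 * ξ₀ ^ 2 * η₀ ^ 2)) := by
    rw [hh, mul_pow, Real.sq_sqrt (by positivity)]
  have key : h ^ 2 - s ^ 2 = ξ₀ ^ 4 * η₀ ^ 2 * (ξ₁ ^ 2 - ξ₀ ^ 2) * (η₁ ^ 2 - η₀ ^ 2) /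
      ((ξ₀ ^ 2 * η₁ ^ 2 + ξ₁ ^ 2 * η₀ ^ 2 - 2 * ξ₀ ^ 2 * η₀ ^ 2) *
       (ξ₁ ^ 2 * η₀ ^ 2 + ξ₀ ^ 2 * η₁ ^ 2 - ξ₀ ^ 2 * η₀ ^ 2)) := by
    rw [hs2, hh2]
    rw [mul_div_assoc', div_sub_div _ _ hD2.ne' hD1.ne', div_eq_div_iff (mul_ne_zero hD2.ne' hD1.ne') (mul_ne_zero hD2.ne' hD1.ne')]
    ring
  have hpos : 0 < h ^ 2 - s ^ 2 := by
    rw [key]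
    have h1 : 0 < ξ₁ ^ 2 - ξ₀ ^ 2 := by nlinarith
    have h2 : 0 < η₁ ^ 2 - η₀ ^ 2 := by nlinarith
    positivity
  refine ⟨key, hpos, ?_⟩
  have hs0 : 0 ≤ s := hs ▸ Real.sqrt_nonneg _
  have hh0 : 0 ≤ h := by rw [hh]; positivity
  nlinarith
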